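/- Let A = kQ/I be a graded quadratic monomial algebra, e a sum of vertex idempotents, and A_e the quotient quadratic monomial algebra defined by collapsing relations through the vertices of e. If e = e' + e'' is a decomposition into sums of vertex idempotents with disjoint supports, then there are isomorphisms of dg algebras (A_{e'})_{e''} ≅ A_e ≅ (A_{e''})_{e'}. -/

import Mathlib

universe w

/-- A graded quiver with a set of quadratic monomial relations: the data `(Q, I)`
presenting a graded quadratic monomial algebra `A = kQ/⟨I⟩` (viewed as a dg algebra
with zero differential).  `rel a b` means that the length-two path `ab` lies in `I`;
`deg` is the grading of the arrows. -/
structure QuadData : Type (w + 1) where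
  V : Type w
  E : Type w
  src : E → V
  tgt : E → V
  deg : E → ℤ
  rel : E → E → Prop
  rel_comp : ∀ a b, rel a b → tgt a = src b

namespace QuadData

variable (Q : QuadData)

/-- A list of arrows is composable (i.e. is a path). -/
def Composable (l : List Q.E) : Prop := l.Chain' fun a b => Q.tgt a = Q.src b

/-- No two consecutive arrows of the path form a relation. -/
def AvoidsRel (l : List Q.E) : Prop := l.Chain' fun a b => ¬ Q.rel a b

/-- All consecutive pairs of arrows of the path are relations. -/
def AllRel (l : List Q.E) : Prop := l.Chain' fun a b => Q.rel a b

end QuadData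

namespace QuadData

variable (Q : QuadData)

/-- There is a cyclic path `α₁ ⋯ αₙ` with `αᵢαᵢ₊₁ ∈ I` for all `i ∈ ℤ/nℤ`. -/
def RelCycle : Prop :=
  ∃ (l : List Q.E) (h : l ≠ []), Q.AllRel l ∧ Q.rel (l.getLast h) (l.head h)

/-- There is a cyclic path `α₁ ⋯ αₙ` with `αᵢαᵢ₊₁ ∉ I` for all `i ∈ ℤ/nℤ`. -/
def RelFreeCycle : Prop :=
  ∃ (l : List Q.E) (h : l ≠ []), Q.Composable l ∧ Q.AvoidsRel l ∧
    Q.tgt (l.getLast h) = Q.src (l.head h) ∧ ¬ Q.rel (l.getLast h) (l.head h)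

/-- Combinatorial characterisation of homological smoothness of `kQ/⟨I⟩`:
there is no cyclic path all of whose consecutive pairs are relations. -/
def SmoothP : Prop := ¬ Q.RelCycle

/-- Combinatorial characterisation of properness of `kQ/⟨I⟩`:
there is no relation-free cyclic path. -/
def ProperP : Prop := ¬ Q.RelFreeCycle

/-- `A = kQ/⟨I⟩` is homologically smooth iff its minimal bimodule resolution, whose
terms are indexed by the paths all of whose consecutive pairs lie in `I`, is finite. -/
def IsSmoothC : Prop := Finite {l : List Q.E // Q.AllRel l}

/-- `A = kQ/⟨I⟩` (with zero differential) is proper iff its total cohomology, i.e.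
`A` itself, is finite dimensional over `k`; a basis of `A` is given by the
relation-avoiding paths. -/
def IsProperC : Prop := Finite {l : List Q.E // Q.Composable l ∧ Q.AvoidsRel l}

/-- The graded quadratic dual `A⁽ᴵ⁾ = kQᵒᵖ/⟨I^⊥⟩`, where
`I^⊥ = {βᵒᵖαᵒᵖ : αβ ∉ I}` and `|αᵒᵖ| = 1 - |α|`. -/
@[reducible] def dual : QuadData where
  V := Q.V
  E := Q.E
  src := Q.tgt
  tgt := Q.src
  deg := fun e => 1 - Q.deg e
  rel := fun x y => Q.tgt y = Q.src x ∧ ¬ Q.rel y x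
  rel_comp := fun _ _ h => h.1.symm

/-- An arrow of the quiver of `A_e` (for `supp` the support of the idempotent `e`):
a path `α₁ ⋯ αₛ` all of whose consecutive pairs are relations passing through
vertices of `supp`, with endpoints outside `supp`. -/
structure CutArrow (supp : Set Q.V) where
  letters : List Q.E
  ne : letters ≠ []
  chain : letters.Chain' fun a b => Q.rel a b ∧ Q.src b ∈ supp
  src_out : Q.src (letters.head ne) ∉ supp
  tgt_out : Q.tgt (letters.getLast ne) ∉ supp

/-- The graded quadratic monomial algebra `A_e` obtained by collapsing the relations
through the vertices in `supp`: vertices `Q₀ ∖ supp`, arrows `[α₁ ⋯ αₛ]` of degree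
`Σ|αᵢ| - s + 1`, and relations `[α₁ ⋯ αₛ][β₁ ⋯ βₜ]` whenever `αₛβ₁ ∈ I`. -/
@[reducible] def cut (supp : Set Q.V) : QuadData where
  V := {v : Q.V // v ∉ supp}
  E := Q.CutArrow supp
  src := fun p => ⟨Q.src (p.letters.head p.ne), p.src_out⟩
  tgt := fun p => ⟨Q.tgt (p.letters.getLast p.ne), p.tgt_out⟩
  deg := fun p => ((p.letters.map Q.deg).sum - p.letters.length) + 1
  rel := fun p q => Q.rel (p.letters.getLast p.ne) (q.letters.head q.ne)
  rel_comp := fun _ _ h => Subtype.ext (Q.rel_comp _ _ h)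

/-- An arrow of the presentation of the idempotent subalgebra `eAe`:
a relation-avoiding path with endpoints in `supp` and interior outside `supp`. -/
structure IdemArrow (supp : Set Q.V) where
  letters : List Q.E
  ne : letters ≠ []
  chain : letters.Chain' fun a b => Q.tgt a = Q.src b ∧ ¬ Q.rel a b ∧ Q.src b ∉ supp
  src_in : Q.src (letters.head ne) ∈ supp
  tgt_in : Q.tgt (letters.getLast ne) ∈ supp

/-- The idempotent subalgebra `eAe` as a graded quadratic monomial algebra. -/
@[reducible] def idem (supp : Set Q.V) : QuadData where
  V := {v : Q.V // v ∈ supp}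
  E := Q.IdemArrow supp
  src := fun p => ⟨Q.src (p.letters.head p.ne), p.src_in⟩
  tgt := fun p => ⟨Q.tgt (p.letters.getLast p.ne), p.tgt_in⟩
  deg := fun p => (p.letters.map Q.deg).sum
  rel := fun p q => Q.rel (p.letters.getLast p.ne) (q.letters.head q.ne)
  rel_comp := fun _ _ h => Subtype.ext (Q.rel_comp _ _ h)

/-- An isomorphism of presentations of graded quadratic monomial algebras: it
induces an isomorphism of the associated dg algebras (with zero differential). -/
structure Iso (Q₁ Q₂ : QuadData) where
  vEquiv : Q₁.V ≃ Q₂.V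
  eEquiv : Q₁.E ≃ Q₂.E
  map_src : ∀ e, Q₂.src (eEquiv e) = vEquiv (Q₁.src e)
  map_tgt : ∀ e, Q₂.tgt (eEquiv e) = vEquiv (Q₁.tgt e)
  map_deg : ∀ e, Q₂.deg (eEquiv e) = Q₁.deg e
  map_rel : ∀ a b, Q₁.rel a b ↔ Q₂.rel (eEquiv a) (eEquiv b)

/-- The conditions for `(Q, I)` to present a (graded) gentle algebra. -/
structure IsGentle (Q : QuadData) : Prop where
  finV : Finite Q.V
  finE : Finite Q.E
  src_two : ∀ a b c : Q.E, Q.src a = Q.src b → Q.src b = Q.src c → a = b ∨ b = c ∨ a = c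
  tgt_two : ∀ a b c : Q.E, Q.tgt a = Q.tgt b → Q.tgt b = Q.tgt c → a = b ∨ b = c ∨ a = c
  rel_right : ∀ a b b', Q.rel a b → Q.rel a b' → b = b'
  rel_left : ∀ a a' b, Q.rel a b → Q.rel a' b → a = a'
  nonrel_right : ∀ a b b', Q.tgt a = Q.src b → Q.tgt a = Q.src b' →
    ¬ Q.rel a b → ¬ Q.rel a b' → b = b'
  nonrel_left : ∀ a a' b, Q.tgt a = Q.src b → Q.tgt a' = Q.src b →
    ¬ Q.rel a b → ¬ Q.rel a' b → a = a'

end QuadData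

section ListHelpers

variable {α : Type*}

theorem head?_flatten_aux (M : List (List α)) (hM : M ≠ []) (h1 : M.head hM ≠ []) :
    M.flatten.head? = (M.head hM).head? := by
  cases M with
  | nil => exact absurd rfl hM
  | cons g M' =>
    simp only [List.flatten_cons, List.head_cons]
    exact List.head?_append_of_ne_nil g (by simpa using h1)

theorem getLast?_flatten_aux : ∀ (M : List (List α)), (∀ g ∈ M, g ≠ []) → (hM : M ≠ []) →
    M.flatten.getLast? = (M.getLast hM).getLast?
  | [], _, hM => absurd rfl hM
  | [g], _, _ => by simp
  | g :: g' :: M', hall, _ => by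
    have ih := getLast?_flatten_aux (g' :: M')
      (fun x hx => hall x (List.mem_cons_of_mem _ hx)) (List.cons_ne_nil _ _)
    have hg' : g' ≠ [] := hall g' (by simp)
    have hne : (g' :: M').flatten ≠ [] := by
      simp only [List.flatten_cons]
      exact fun h => hg' (List.append_eq_nil_iff.mp h).1
    rw [List.flatten_cons, List.getLast?_append_of_ne_nil _ hne, ih,
      List.getLast_cons (by simp : g' :: M' ≠ [])]

end ListHelpers

namespace QuadData

variable {Q : QuadData} {s₁ s₂ : Set Q.V}

theorem CutArrow.ext' {s : Set Q.V} {p q : Q.CutArrow s} (h : p.letters = q.letters) : p = q := by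
  cases p; cases q; cases h; rfl

theorem blocks_all_ne (B : List (Q.CutArrow s₁)) :
    ∀ g ∈ B.map CutArrow.letters, g ≠ [] := by
  intro g hg
  obtain ⟨p, _, rfl⟩ := List.mem_map.mp hg
  exact p.ne

theorem blocks_flatten_ne (B : List (Q.CutArrow s₁)) (hB : B ≠ []) :
    (B.map CutArrow.letters).flatten ≠ [] := by
  cases B with
  | nil => exact absurd rfl hB
  | cons p Bt =>
    simp only [List.map_cons, List.flatten_cons]
    exact fun h => p.ne (List.append_eq_nil_iff.mp h).1

theorem head_blocks (B : List (Q.CutArrow s₁)) (hB : B ≠ [])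
    (h : (B.map CutArrow.letters).flatten ≠ []) :
    (B.map CutArrow.letters).flatten.head h = (B.head hB).letters.head (B.head hB).ne := by
  have h0 := head?_flatten_aux (B.map CutArrow.letters) (by simpa using hB)
    (by rw [List.head_map]; exact (B.head hB).ne)
  rw [List.head?_eq_head h, List.head_map, List.head?_eq_head (B.head hB).ne] at h0
  exact Option.some.inj h0

theorem getLast_blocks (B : List (Q.CutArrow s₁)) (hB : B ≠ [])
    (h : (B.map CutArrow.letters).flatten ≠ []) :
    (B.map CutArrow.letters).flatten.getLast h
      = (B.getLast hB).letters.getLast (B.getLast hB).ne := by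
  have h0 := getLast?_flatten_aux (B.map CutArrow.letters) (blocks_all_ne B) (by simpa using hB)
  rw [List.getLast?_eq_getLast h, List.getLast_map, List.getLast?_eq_getLast (B.getLast hB).ne]
    at h0
  exact Option.some.inj h0

end QuadData
namespace QuadData

variable {Q : QuadData} {s₁ s₂ : Set Q.V}

/-- Flattening, as a map from arrows of `(Q.cut s₁).cut {v | v.1 ∈ s₂}` to arrows of
`Q.cut (s₁ ∪ s₂)`. -/
def fwd (P : (Q.cut s₁).CutArrow {v | v.1 ∈ s₂}) : Q.CutArrow (s₁ ∪ s₂) where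
  letters := (P.letters.map CutArrow.letters).flatten
  ne := blocks_flatten_ne P.letters P.ne
  chain := by
    show List.IsChain _ _
    rw [List.isChain_flatten (by intro h; exact blocks_all_ne P.letters [] h rfl)]
    constructor
    · intro g hg
      obtain ⟨p, _, rfl⟩ := List.mem_map.mp hg
      exact p.chain.imp fun _ _ h => ⟨h.1, Or.inl h.2⟩
    · rw [List.isChain_map]
      refine P.chain.imp ?_
      intro p q hpq x hx y hy
      rw [List.getLast?_eq_getLast p.ne] at hx
      rw [List.head?_eq_head q.ne] at hy
      obtain rfl : x = p.letters.getLast p.ne := by simpa using hx.symm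
      obtain rfl : y = q.letters.head q.ne := by simpa using hy.symm
      exact ⟨hpq.1, Or.inr hpq.2⟩
  src_out := by
    rw [head_blocks P.letters P.ne]
    rintro (h | h)
    · exact (P.letters.head P.ne).src_out h
    · exact P.src_out h
  tgt_out := by
    rw [getLast_blocks P.letters P.ne]
    rintro (h | h)
    · exact (P.letters.getLast P.ne).tgt_out h
    · exact P.tgt_out h

theorem fwd_letters (P : (Q.cut s₁).CutArrow {v | v.1 ∈ s₂}) :
    (fwd P).letters = (P.letters.map CutArrow.letters).flatten := rfl

theorem deg_aux (l : List (Q.CutArrow s₁)) :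
    ((l.map CutArrow.letters).flatten.map Q.deg).sum
        - ((l.map CutArrow.letters).flatten.length : ℤ) + 1
    = (l.map fun p => ((p.letters.map Q.deg).sum - (p.letters.length : ℤ)) + 1).sum
        - (l.length : ℤ) + 1 := by
  induction l with
  | nil => simp
  | cons p t ih =>
    simp only [List.map_cons, List.flatten_cons, List.map_append, List.sum_append,
      List.length_append, List.sum_cons, List.length_cons] at *
    push_cast at *
    linarith

end QuadData
namespace QuadData

variable {Q : QuadData} {s₁ s₂ : Set Q.V}

theorem prefix_eq (hdisj : Disjoint s₁ s₂) :
    ∀ (g : List Q.E), g ≠ [] → ∀ (g' r r' : List Q.E), g' ≠ [] →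
      g.Chain' (fun _ b => Q.src b ∈ s₁) → g'.Chain' (fun _ b => Q.src b ∈ s₁) →
      (∀ x ∈ r.head?, Q.src x ∈ s₂) → (∀ x ∈ r'.head?, Q.src x ∈ s₂) →
      g ++ r = g' ++ r' → g = g' ∧ r = r' := by
  intro g
  induction g with
  | nil => exact fun h => absurd rfl h
  | cons a gt ih =>
    intro _ g' r r' hg' cg cg' hr hr' heq
    cases g' with
    | nil => exact absurd rfl hg'
    | cons a' g't =>
      obtain ⟨rfl, heq2⟩ : a = a' ∧ gt ++ r = g't ++ r' := by simpa using heq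
      clear heq
      cases gt with
      | nil =>
        cases g't with
        | nil => exact ⟨rfl, by simpa using heq2⟩
        | cons c t =>
          exfalso
          have hre : r = c :: (t ++ r') := by simpa using heq2
          have h2 : Q.src c ∈ s₂ := hr c (by rw [hre]; rfl)
          have h1 : Q.src c ∈ s₁ := (List.isChain_cons_cons.mp cg').1
          exact Set.disjoint_left.mp hdisj h1 h2
      | cons b gt' =>
        cases g't with
        | nil =>
          exfalso
          have hre : r' = b :: (gt' ++ r) := by simpa using heq2.symm
          have h2 : Q.src b ∈ s₂ := hr' b (by rw [hre]; rfl)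
          have h1 : Q.src b ∈ s₁ := (List.isChain_cons_cons.mp cg).1
          exact Set.disjoint_left.mp hdisj h1 h2
        | cons b' g't' =>
          obtain ⟨h1, h2⟩ := ih (by simp) (b' :: g't') r r' (by simp) cg.tail cg'.tail hr hr' heq2
          exact ⟨by rw [h1], h2⟩

theorem blocks_eq (hdisj : Disjoint s₁ s₂) : ∀ (B B' : List (Q.CutArrow s₁)),
    B.Chain' (fun _ q => Q.src (q.letters.head q.ne) ∈ s₂) →
    B'.Chain' (fun _ q => Q.src (q.letters.head q.ne) ∈ s₂) →
    (B.map CutArrow.letters).flatten = (B'.map CutArrow.letters).flatten → B = B' := by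
  intro B
  induction B with
  | nil =>
    intro B' _ _ h
    cases B' with
    | nil => rfl
    | cons q B't =>
      simp only [List.map_nil, List.flatten_nil, List.map_cons, List.flatten_cons] at h
      exact absurd (List.append_eq_nil_iff.mp h.symm).1 q.ne
  | cons p Bt ih =>
    intro B' hc hc' h
    cases B' with
    | nil =>
      simp only [List.map_nil, List.flatten_nil, List.map_cons, List.flatten_cons] at h
      exact absurd (List.append_eq_nil_iff.mp h).1 p.ne
    | cons q B't =>
      simp only [List.map_cons, List.flatten_cons] at h
      have key : ∀ (C : List (Q.CutArrow s₁)) (p0 : Q.CutArrow s₁),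
          (p0 :: C).Chain' (fun _ q => Q.src (q.letters.head q.ne) ∈ s₂) →
          ∀ x ∈ ((C.map CutArrow.letters).flatten).head?, Q.src x ∈ s₂ := by
        intro C p0 hC x hx
        cases C with
        | nil => simp at hx
        | cons p2 Ct =>
          have hh : ((p2 :: Ct).map CutArrow.letters).flatten.head?
              = some (p2.letters.head p2.ne) := by
            simp only [List.map_cons, List.flatten_cons]
            rw [List.head?_append_of_ne_nil _ p2.ne, List.head?_eq_head]
          rw [hh] at hx
          obtain rfl : x = p2.letters.head p2.ne := by simpa using hx.symm
          exact (List.isChain_cons_cons.mp hC).1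
      obtain ⟨h1, h2⟩ := prefix_eq hdisj p.letters p.ne q.letters _ _ q.ne
        (p.chain.imp fun _ _ h => h.2) (q.chain.imp fun _ _ h => h.2)
        (key Bt p hc) (key B't q hc') h
      obtain rfl : p = q := CutArrow.ext' h1
      rw [ih B't hc.tail hc'.tail h2]

end QuadData
namespace QuadData

variable {Q : QuadData} {s₁ s₂ : Set Q.V}

theorem exists_blocks (hdisj : Disjoint s₁ s₂) :
    ∀ (L : List Q.E) (hL : L ≠ []),
      L.Chain' (fun a b => Q.rel a b ∧ Q.src b ∈ s₁ ∪ s₂) →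
      Q.tgt (L.getLast hL) ∉ s₁ →
      ∃ (g : List Q.E) (B : List (Q.CutArrow s₁)) (hg : g ≠ []),
        g.head hg = L.head hL ∧
        g.Chain' (fun a b => Q.rel a b ∧ Q.src b ∈ s₁) ∧
        (B = [] → Q.tgt (g.getLast hg) ∉ s₁) ∧
        (∀ p ∈ B.head?, Q.rel (g.getLast hg) (p.letters.head p.ne) ∧
          Q.src (p.letters.head p.ne) ∈ s₂) ∧
        B.Chain' (fun p q => Q.rel (p.letters.getLast p.ne) (q.letters.head q.ne) ∧
          Q.src (q.letters.head q.ne) ∈ s₂) ∧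
        g ++ (B.map CutArrow.letters).flatten = L := by
  intro L
  induction L with
  | nil => exact fun h => absurd rfl h
  | cons a Lt ih =>
    intro _ hch htgt
    cases Lt with
    | nil =>
      exact ⟨[a], [], by simp, rfl, List.isChain_singleton _, fun _ => htgt, by simp, List.isChain_nil, by simp⟩
    | cons b Lt' =>
      obtain ⟨⟨hab, hbT⟩, hch'⟩ := List.isChain_cons_cons.mp hch
      have htgt' : Q.tgt ((b :: Lt').getLast (by simp)) ∉ s₁ := by
        rwa [List.getLast_cons (by simp : b :: Lt' ≠ [])] at htgt
      obtain ⟨g, B, hg, hhead, cg, hnil, hjun, hchB, hflat⟩ := ih (by simp) hch' htgt'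
      by_cases hb : Q.src b ∈ s₁
      · refine ⟨a :: g, B, by simp, rfl, ?_, ?_, ?_, hchB, ?_⟩
        · refine List.isChain_cons.mpr ⟨?_, cg⟩
          intro y hy
          rw [List.head?_eq_head hg] at hy
          obtain rfl : y = g.head hg := by simpa using hy.symm
          rw [hhead]
          exact ⟨hab, hb⟩
        · intro hB
          rw [List.getLast_cons hg]
          exact hnil hB
        · intro p hp
          rw [List.getLast_cons hg]
          exact hjun p hp
        · rw [List.cons_append, hflat]
      · have hb2 : Q.src b ∈ s₂ := hbT.resolve_left hb
        have htg : Q.tgt (g.getLast hg) ∉ s₁ := by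
          cases B with
          | nil => exact hnil rfl
          | cons q Bt =>
            have h := hjun q (by simp)
            rw [Q.rel_comp _ _ h.1]
            exact fun hx => Set.disjoint_left.mp hdisj hx h.2
        refine ⟨[a], ⟨g, hg, cg, by rw [hhead]; exact hb, htg⟩ :: B,
          by simp, rfl, List.isChain_singleton _, by simp, ?_, ?_, ?_⟩
        · intro p hp
          obtain rfl : p = ⟨g, hg, cg, by rw [hhead]; exact hb, htg⟩ := by simpa using hp.symm
          refine ⟨?_, ?_⟩
          · show Q.rel (([a]).getLast (by simp)) (g.head hg)
            rw [List.getLast_singleton, hhead]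
            exact hab
          · show Q.src (g.head hg) ∈ s₂
            rw [hhead]
            exact hb2
        · refine List.isChain_cons.mpr ⟨?_, hchB⟩
          intro q hq
          exact hjun q hq
        · simp only [List.map_cons, List.flatten_cons, List.singleton_append]
          rw [hflat]

end QuadData
namespace QuadData

variable {Q : QuadData} {s₁ s₂ : Set Q.V}

theorem fwd_injective (hdisj : Disjoint s₁ s₂) :
    Function.Injective (fwd : (Q.cut s₁).CutArrow {v | v.1 ∈ s₂} → Q.CutArrow (s₁ ∪ s₂)) := by
  intro P P' h
  refine CutArrow.ext' (blocks_eq hdisj _ _ ?_ ?_ (congrArg CutArrow.letters h))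
  · exact P.chain.imp fun _ _ hpq => hpq.2
  · exact P'.chain.imp fun _ _ hpq => hpq.2

theorem fwd_surjective (hdisj : Disjoint s₁ s₂) :
    Function.Surjective (fwd : (Q.cut s₁).CutArrow {v | v.1 ∈ s₂} → Q.CutArrow (s₁ ∪ s₂)) := by
  intro l
  obtain ⟨g, B, hg, hhead, cg, hnil, hjun, hchB, hflat⟩ :=
    exists_blocks hdisj l.letters l.ne l.chain (fun h => l.tgt_out (Or.inl h))
  have htg : Q.tgt (g.getLast hg) ∉ s₁ := by
    cases B with
    | nil => exact hnil rfl
    | cons q Bt =>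
      have h := hjun q (by simp)
      rw [Q.rel_comp _ _ h.1]
      exact fun hx => Set.disjoint_left.mp hdisj hx h.2
  set p0 : Q.CutArrow s₁ :=
    ⟨g, hg, cg, by rw [hhead]; exact fun h => l.src_out (Or.inl h), htg⟩ with hp0
  have hfl : ((p0 :: B).map CutArrow.letters).flatten = l.letters := by
    simp only [List.map_cons, List.flatten_cons]
    exact hflat
  refine ⟨⟨p0 :: B, by simp, ?_, ?_, ?_⟩, ?_⟩
  · refine List.isChain_cons.mpr ⟨?_, hchB⟩
    intro q hq
    exact hjun q hq
  · show Q.src (g.head hg) ∉ s₂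
    rw [hhead]
    exact fun h => l.src_out (Or.inr h)
  · have hne : p0 :: B ≠ [] := List.cons_ne_nil _ _
    have hA : ((p0 :: B).map CutArrow.letters).flatten ≠ [] := blocks_flatten_ne _ hne
    have h2 := getLast_blocks (p0 :: B) hne hA
    have h3 : ((p0 :: B).map CutArrow.letters).flatten.getLast hA = l.letters.getLast l.ne := by
      have h4 : ((p0 :: B).map CutArrow.letters).flatten.getLast? = l.letters.getLast? := by
        rw [hfl]
      rw [List.getLast?_eq_getLast hA, List.getLast?_eq_getLast l.ne] at h4
      exact Option.some.inj h4
    show Q.tgt (((p0 :: B).getLast hne).letters.getLast ((p0 :: B).getLast hne).ne) ∉ s₂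
    rw [← h2, h3]
    exact fun h => l.tgt_out (Or.inr h)
  · exact CutArrow.ext' hfl

/-- The vertex equivalence. -/
def vEquivCut : ((Q.cut s₁).cut {v | v.1 ∈ s₂}).V ≃ (Q.cut (s₁ ∪ s₂)).V where
  toFun w := ⟨w.1.1, fun h => h.elim w.1.2 w.2⟩
  invFun v := ⟨⟨v.1, fun h => v.2 (Or.inl h)⟩, fun h => v.2 (Or.inr h)⟩
  left_inv _ := rfl
  right_inv _ := rfl

/-- The main isomorphism. -/
noncomputable def theIso (hdisj : Disjoint s₁ s₂) :
    Iso ((Q.cut s₁).cut {v | v.1 ∈ s₂}) (Q.cut (s₁ ∪ s₂)) where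
  vEquiv := vEquivCut
  eEquiv := Equiv.ofBijective fwd ⟨fwd_injective hdisj, fwd_surjective hdisj⟩
  map_src e := by
    apply Subtype.ext
    show Q.src (((e.letters.map CutArrow.letters).flatten).head (blocks_flatten_ne _ e.ne))
      = Q.src ((e.letters.head e.ne).letters.head (e.letters.head e.ne).ne)
    rw [head_blocks e.letters e.ne]
  map_tgt e := by
    apply Subtype.ext
    show Q.tgt (((e.letters.map CutArrow.letters).flatten).getLast (blocks_flatten_ne _ e.ne))
      = Q.tgt ((e.letters.getLast e.ne).letters.getLast (e.letters.getLast e.ne).ne)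
    rw [getLast_blocks e.letters e.ne]
  map_deg e := by
    show ((e.letters.map CutArrow.letters).flatten.map Q.deg).sum
        - ((e.letters.map CutArrow.letters).flatten.length : ℤ) + 1
      = (e.letters.map fun p => ((p.letters.map Q.deg).sum - (p.letters.length : ℤ)) + 1).sum
        - (e.letters.length : ℤ) + 1
    exact deg_aux e.letters
  map_rel a b := by
    show Q.rel ((a.letters.getLast a.ne).letters.getLast _) ((b.letters.head b.ne).letters.head _)
      ↔ Q.rel (((a.letters.map CutArrow.letters).flatten).getLast (blocks_flatten_ne _ a.ne))
        (((b.letters.map CutArrow.letters).flatten).head (blocks_flatten_ne _ b.ne))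
    rw [getLast_blocks a.letters a.ne, head_blocks b.letters b.ne]

end QuadData
/-- Let `A = kQ/I` be a graded quadratic monomial algebra and
`e = e' + e''` a decomposition of a sum of vertex idempotents into sums with disjoint
supports `s₁, s₂`.  Then `(A_{e'})_{e''} ≅ A_e ≅ (A_{e''})_{e'}` as dg algebras. -/
theorem cut_cut_iso (Q : QuadData) (s₁ s₂ : Set Q.V) (hdisj : Disjoint s₁ s₂) :
    Nonempty (QuadData.Iso ((Q.cut s₁).cut {v | v.1 ∈ s₂}) (Q.cut (s₁ ∪ s₂))) ∧
    Nonempty (QuadData.Iso ((Q.cut s₂).cut {v | v.1 ∈ s₁}) (Q.cut (s₁ ∪ s₂))) := by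
  refine ⟨⟨QuadData.theIso hdisj⟩, ?_⟩
  rw [Set.union_comm s₁ s₂]
  exact ⟨QuadData.theIso hdisj.symm⟩
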